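/- For every Tanner graph G there exists a finite natural number t such that every irreducible pseudocodeword p = (p_1,…,p_n) of G satisfies p_i ≤ t for all i. Equivalently, every pseudocodeword of G having a component larger than t can be written as a sum of two nonzero pseudocodewords of G. -/

import Mathlib

/-- A Tanner graph with `n` variable nodes and `m` check nodes, given by the
neighborhood `N u` (the set of variable nodes adjacent to check node `u`). -/
structure TannerGraph (n m : ℕ) where
  N : Fin m → Finset (Fin n)

/-- A (lift-realizable) pseudocodeword of `G`: a nonnegative integer vector such
that at every check node `u` it is a nonnegative integer combination of the
even-cardinality subsets of `N(u)` (local codewords of the parity check). -/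
def IsPseudocodeword {n m : ℕ} (G : TannerGraph n m) (p : Fin n → ℕ) : Prop :=
  ∀ j : Fin m, ∃ x : Finset (Fin n) → ℕ,
    ∀ i ∈ G.N j,
      p i = ∑ S ∈ (G.N j).powerset.filter (fun S => Even S.card ∧ i ∈ S), x S

/-- An irreducible pseudocodeword: nonzero and not a sum of two nonzero
pseudocodewords. -/
def IsIrreduciblePcw {n m : ℕ} (G : TannerGraph n m) (p : Fin n → ℕ) : Prop :=
  p ≠ 0 ∧ ¬ ∃ q r : Fin n → ℕ,
    IsPseudocodeword G q ∧ IsPseudocodeword G r ∧ q ≠ 0 ∧ r ≠ 0 ∧ p = q + r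

/-- Index type: variable coordinates plus witness coordinates. -/
abbrev PcwIdx (n m : ℕ) := Fin n ⊕ (Fin m × Finset (Fin n))

/-- The monoid of pseudocodewords bundled with witnesses. -/
def PcwW {n m : ℕ} (G : TannerGraph n m) : Set (PcwIdx n m → ℕ) :=
  {w | ∀ j : Fin m, ∀ i ∈ G.N j,
    w (Sum.inl i) =
      ∑ S ∈ (G.N j).powerset.filter (fun S => Even S.card ∧ i ∈ S), w (Sum.inr (j, S))}

/-- Projection to the variable coordinates. -/
def pcwProj {n m : ℕ} (w : PcwIdx n m → ℕ) : Fin n → ℕ := fun i => w (Sum.inl i)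

lemma pcwProj_isPcw {n m : ℕ} (G : TannerGraph n m) {w : PcwIdx n m → ℕ}
    (hw : w ∈ PcwW G) : IsPseudocodeword G (pcwProj w) := by
  intro j
  exact ⟨fun S => w (Sum.inr (j, S)), fun i hi => hw j i hi⟩

lemma exists_lift {n m : ℕ} (G : TannerGraph n m) {p : Fin n → ℕ}
    (hp : IsPseudocodeword G p) : ∃ w ∈ PcwW G, pcwProj w = p := by
  choose x hx using hp
  refine ⟨Sum.elim p (fun q => x q.1 q.2), ?_, rfl⟩
  intro j i hi
  simpa using hx j i hi

/-- Minimal nonzero elements of `PcwW G`. -/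
def PcwMin {n m : ℕ} (G : TannerGraph n m) : Set (PcwIdx n m → ℕ) :=
  {w | w ∈ PcwW G ∧ w ≠ 0 ∧ ∀ v ∈ PcwW G, v ≠ 0 → v ≤ w → v = w}

/-- By Dickson's lemma, the set of minimal nonzero elements is finite. -/
lemma pcwMin_finite {n m : ℕ} (G : TannerGraph n m) : (PcwMin G).Finite := by
  have hanti : IsAntichain (· ≤ ·) (PcwMin G) := by
    intro u hu v hv huv hle
    exact huv (hv.2.2 u hu.1 hu.2.1 hle)
  have hpwo : (PcwMin G).IsPWO :=
    Set.isPWO_of_wellQuasiOrderedLE (PcwMin G)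
  exact hanti.finite_of_partiallyWellOrderedOn hpwo

lemma sub_mem_PcwW {n m : ℕ} (G : TannerGraph n m) {v w : PcwIdx n m → ℕ}
    (hv : v ∈ PcwW G) (hw : w ∈ PcwW G) (hle : v ≤ w) : w - v ∈ PcwW G := by
  intro j i hi
  have h1 := hv j i hi
  have h2 := hw j i hi
  have hsum : (∑ S ∈ (G.N j).powerset.filter (fun S => Even S.card ∧ i ∈ S),
      (w - v) (Sum.inr (j, S))) + (∑ S ∈ (G.N j).powerset.filter (fun S => Even S.card ∧ i ∈ S),
      v (Sum.inr (j, S))) = ∑ S ∈ (G.N j).powerset.filter (fun S => Even S.card ∧ i ∈ S),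
      w (Sum.inr (j, S)) := by
    rw [← Finset.sum_add_distrib]
    refine Finset.sum_congr rfl fun S _ => ?_
    have ha : (w - v) (Sum.inr (j, S)) = w (Sum.inr (j, S)) - v (Sum.inr (j, S)) := rfl
    have hb : v (Sum.inr (j, S)) ≤ w (Sum.inr (j, S)) := hle (Sum.inr (j, S))
    omega
  have h3 : v (Sum.inl i) ≤ w (Sum.inl i) := hle (Sum.inl i)
  have h4 : (w - v) (Sum.inl i) = w (Sum.inl i) - v (Sum.inl i) := rfl
  omega

/-- Every nonzero element of `PcwW` dominates a minimal one. -/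
lemma exists_min_le {n m : ℕ} (G : TannerGraph n m) :
    ∀ k (w : PcwIdx n m → ℕ), (∑ i, w i) ≤ k → w ∈ PcwW G → w ≠ 0 →
      ∃ u ∈ PcwMin G, u ≤ w := by
  intro k
  induction k with
  | zero =>
    intro w hk hw hne
    exfalso
    apply hne
    funext i
    have := Finset.sum_eq_zero_iff.mp (Nat.le_zero.mp hk) i (Finset.mem_univ i)
    simpa using this
  | succ k ih =>
    intro w hk hw hne
    by_cases hmin : ∀ v ∈ PcwW G, v ≠ 0 → v ≤ w → v = w
    · exact ⟨w, ⟨hw, hne, hmin⟩, le_refl w⟩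
    · push_neg at hmin
      obtain ⟨v, hv, hvne, hvle, hvneq⟩ := hmin
      have hlt : (∑ i, v i) < ∑ i, w i := by
        apply Finset.sum_lt_sum (fun i _ => hvle i)
        by_contra hc
        push_neg at hc
        exact hvneq (funext fun i => le_antisymm (hvle i) (hc i (Finset.mem_univ i)))
      obtain ⟨u, hu, hule⟩ := ih v (by omega) hv hvne
      exact ⟨u, hu, le_trans hule hvle⟩

/-- An irreducible pseudocodeword coincides with the projection of some minimal
element of `PcwW G`. -/
lemma irreducible_eq_min {n m : ℕ} (G : TannerGraph n m) :
    ∀ k (w : PcwIdx n m → ℕ), (∑ i, w i) ≤ k → w ∈ PcwW G →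
      IsIrreduciblePcw G (pcwProj w) → ∃ u ∈ PcwMin G, pcwProj w = pcwProj u := by
  intro k
  induction k with
  | zero =>
    intro w hk hw hirr
    exfalso
    apply hirr.1
    funext i
    have := Finset.sum_eq_zero_iff.mp (Nat.le_zero.mp hk) (Sum.inl i) (Finset.mem_univ _)
    simpa [pcwProj] using this
  | succ k ih =>
    intro w hk hw hirr
    have hwne : w ≠ 0 := by
      intro h
      apply hirr.1
      funext i
      simp [pcwProj, h]
    obtain ⟨u, hu, hule⟩ := exists_min_le G (k + 1) w hk hw hwne
    have hw' : w - u ∈ PcwW G := sub_mem_PcwW G hu.1 hw hule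
    by_cases hpu : pcwProj u = 0
    · -- the minimal element is invisible on variable coordinates; recurse on `w - u`
      have hproj : pcwProj (w - u) = pcwProj w := by
        funext i
        have h0 : u (Sum.inl i) = 0 := congrFun hpu i
        have h4 : (w - u) (Sum.inl i) = w (Sum.inl i) - u (Sum.inl i) := rfl
        simp only [pcwProj, h4, h0, Nat.sub_zero]
      have hune : ∃ i0, u i0 ≠ 0 := by
        by_contra hc
        push_neg at hc
        exact hu.2.1 (funext fun i => hc i)
      obtain ⟨i0, hi0⟩ := hune
      have hsum : (∑ i, (w - u) i) < ∑ i, w i := by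
        apply Finset.sum_lt_sum
        · intro i _
          have h4 : (w - u) i = w i - u i := rfl
          omega
        · refine ⟨i0, Finset.mem_univ i0, ?_⟩
          have h4 : (w - u) i0 = w i0 - u i0 := rfl
          have h5 : u i0 ≤ w i0 := hule i0
          omega
      obtain ⟨u', hu', heq⟩ := ih (w - u) (by omega) hw' (hproj ▸ hirr)
      exact ⟨u', hu', hproj ▸ heq⟩
    · by_cases hpw' : pcwProj (w - u) = 0
      · -- `w` projects exactly to the projection of the minimal element `u`
        refine ⟨u, hu, funext fun i => ?_⟩
        have h0 : (w - u) (Sum.inl i) = 0 := congrFun hpw' i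
        have h4 : (w - u) (Sum.inl i) = w (Sum.inl i) - u (Sum.inl i) := rfl
        have h5 : u (Sum.inl i) ≤ w (Sum.inl i) := hule (Sum.inl i)
        show w (Sum.inl i) = u (Sum.inl i)
        omega
      · -- otherwise `pcwProj w` splits as a sum of two nonzero pseudocodewords
        exfalso
        apply hirr.2
        refine ⟨pcwProj u, pcwProj (w - u), pcwProj_isPcw G hu.1, pcwProj_isPcw G hw',
          hpu, hpw', funext fun i => ?_⟩
        have h4 : (w - u) (Sum.inl i) = w (Sum.inl i) - u (Sum.inl i) := rfl
        have h5 : u (Sum.inl i) ≤ w (Sum.inl i) := hule (Sum.inl i)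
        show w (Sum.inl i) = u (Sum.inl i) + (w - u) (Sum.inl i)
        omega

theorem exists_finite_t_value {n m : ℕ} (G : TannerGraph n m) :
    ∃ t : ℕ, ∀ p : Fin n → ℕ, IsPseudocodeword G p → IsIrreduciblePcw G p →
      ∀ i, p i ≤ t := by
  classical
  refine ⟨(pcwMin_finite G).toFinset.sup fun w => Finset.univ.sup fun i => w (Sum.inl i), ?_⟩
  intro p hp hirr i
  obtain ⟨w, hw, hproj⟩ := exists_lift G hp
  obtain ⟨u, hu, heq⟩ := irreducible_eq_min G (∑ i, w i) w le_rfl hw (hproj ▸ hirr)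
  have h1 : p i = u (Sum.inl i) := by
    have := congrFun heq i
    rw [← hproj]
    exact this
  rw [h1]
  calc u (Sum.inl i) ≤ Finset.univ.sup fun i => u (Sum.inl i) :=
        Finset.le_sup (f := fun i => u (Sum.inl i)) (Finset.mem_univ i)
    _ ≤ _ := Finset.le_sup (f := fun w => Finset.univ.sup fun i => w (Sum.inl i))
        ((pcwMin_finite G).mem_toFinset.mpr hu)
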